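/- arXiv:1407.6665 — 2 statements merged into one kernel-verified Lean document; each statement's English description precedes it below -/
import Mathlib

section
/- If a node v has rank at least k and at most (k/2)·F unmarked children, then v has at least k·ρ̂/2 efficiently linked unmarked children, each having rank less than k. -/
/-- A node of a heap structure, recording only what the rank function depends on:
whether the node is marked, and the ordered list of its children (leftmost first). -/
inductive MTree : Type
  | node (marked : Bool) (children : List MTree) : MTree

def MTree.marked : MTree → Bool
  | .node m _ => m

def MTree.children : MTree → List MTree
  | .node _ cs => cs

/-- The parameters of the rank function: `rho` is `ρ̂ = 2 f(n) + 1`, `F` is the default-case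
threshold, and `w` is the fixed window constant of the efficient-link condition. -/
structure RankParams where
  rho : ℕ
  F : ℕ
  w : ℕ

/-- One step of the right-to-left computation of the rank of a node from the ranks of its
unmarked children.  The state is `(r, run, eff, effRanks)`: the current value `r_{i-1}(x)`,
the size so far of `noninc(y_i)` minus one (the current maximal run of non-incremental right
siblings), the number of efficiently linked elements of that run, and the list of ranks of all
efficiently linked unmarked children seen so far.  Child `y_i` (of rank `cr`) is efficiently
linked iff `r_{i-1}(x) − w ≤ cr ≤ r_{i-1}(x)`; the value increments (`r_i(x) = r_{i-1}(x)+1`)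
exactly when `y_i` is efficiently linked and is the `ρ̂`-th efficiently linked element of
`noninc(y_i)` (efficient case) or `|noninc(y_i)| = F` (default case). -/
def rankStep (P : RankParams) (st : ℕ × ℕ × ℕ × List ℕ) (cr : ℕ) : ℕ × ℕ × ℕ × List ℕ :=
  let r := st.1
  let run := st.2.1
  let eff := st.2.2.1
  let effRanks := st.2.2.2
  let isEff : Bool := decide (r ≤ cr + P.w) && decide (cr ≤ r)
  let eff' := if isEff then eff + 1 else eff
  let effRanks' := if isEff then effRanks ++ [cr] else effRanks
  let run' := run + 1
  if (isEff && decide (eff' = P.rho)) || decide (run' = P.F) then (r + 1, 0, 0, effRanks')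
  else (r, run', eff', effRanks')

/-- Fold the rank computation over the list of ranks of the unmarked children,
given right-to-left (in order of attachment). -/
def rankAux (P : RankParams) (rs : List ℕ) : ℕ × ℕ × ℕ × List ℕ :=
  rs.foldl (rankStep P) (0, 0, 0, [])

/-- The full rank data of a node: its rank together with the ranks of its efficiently linked
unmarked children.  The children are processed right to left, and only unmarked children are
taken into account (the rank only depends on the unmarked subtree). -/
def MTree.rankData (P : RankParams) : MTree → ℕ × ℕ × ℕ × List ℕ
  | .node _ cs =>
      rankAux P
        (((cs.filter (fun c => !c.marked)).reverse).attach.map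
          (fun c => (MTree.rankData P c.1).1))
decreasing_by
  rename_i cs
  have hmem : c.1 ∈ cs := by
    have h := c.2
    rw [List.mem_reverse, List.mem_filter] at h
    exact h.1
  have := List.sizeOf_lt_of_mem hmem
  simp only [MTree.node.sizeOf_spec]
  omega

/-- The rank `r(x)` of a node. -/
def MTree.rank (P : RankParams) (t : MTree) : ℕ := (t.rankData P).1

/-- The ranks of the efficiently linked unmarked children of a node (right to left). -/
def MTree.effLinkedChildRanks (P : RankParams) (t : MTree) : List ℕ := (t.rankData P).2.2.2

/-- The number of nodes of the unmarked subtree of a node (the node's subtree after detaching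
every marked node from its parent). -/
def MTree.unmarkedSize : MTree → ℕ
  | .node _ cs => 1 + ((cs.filter (fun c => !c.marked)).attach.map
      (fun c => MTree.unmarkedSize c.1)).sum
decreasing_by
  rename_i cs
  have hmem : c.1 ∈ cs := by
    have h := c.2
    rw [List.mem_filter] at h
    exact h.1
  have := List.sizeOf_lt_of_mem hmem
  simp only [MTree.node.sizeOf_spec]
  omega

/-- The number of unmarked children of a node. -/
def MTree.unmarkedChildrenCount (t : MTree) : ℕ :=
  (t.children.filter (fun c => !c.marked)).length

lemma rankStep_eq (P : RankParams) (r run eff : ℕ) (L : List ℕ) (cr : ℕ) :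
    rankStep P (r, run, eff, L) cr =
      if r ≤ cr + P.w ∧ cr ≤ r then
        (if eff + 1 = P.rho ∨ run + 1 = P.F then (r+1,0,0,L++[cr])
         else (r, run+1, eff+1, L++[cr]))
      else
        (if run + 1 = P.F then (r+1,0,0,L) else (r, run+1, eff, L)) := by
  by_cases h1 : r ≤ cr + P.w <;> by_cases h2 : cr ≤ r <;>
    simp [rankStep, h1, h2]

def ckAux (k : ℕ) (L : List ℕ) : ℕ := (L.filter (fun r => decide (r < k))).length

lemma ckAux_append (k cr : ℕ) (L : List ℕ) :
    ckAux k (L ++ [cr]) = ckAux k L + (if cr < k then 1 else 0) := by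
  simp only [ckAux, List.filter_append]
  split_ifs with h <;> simp [h]

def potAux (P : RankParams) (k : ℕ) (st : ℕ × ℕ × ℕ × List ℕ) : ℕ :=
  2 * P.F * P.rho * min st.1 k +
    (if st.1 < k then 2 * P.rho * st.2.1 + 2 * P.F * st.2.2.1 else 0)

lemma step_ineq (P : RankParams) (k : ℕ) (st : ℕ × ℕ × ℕ × List ℕ) (cr : ℕ) :
    potAux P k (rankStep P st cr) + 2 * P.F * ckAux k st.2.2.2 ≤
      potAux P k st + 2 * P.rho + 2 * P.F * ckAux k (rankStep P st cr).2.2.2 := by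
  obtain ⟨r, run, eff, L⟩ := st
  rw [rankStep_eq]
  by_cases hE : r ≤ cr + P.w ∧ cr ≤ r
  · rw [if_pos hE]
    by_cases hI : eff + 1 = P.rho ∨ run + 1 = P.F
    · rw [if_pos hI]
      simp only [potAux, ckAux_append]
      by_cases hrk : r < k
      · have hmin : min (r+1) k = min r k + 1 := by omega
        rw [hmin, if_pos hrk]
        by_cases hr1k : r + 1 < k <;> simp only [hr1k, ite_true, ite_false]
        all_goals {
          have hcr : cr < k := by omega
          rw [if_pos hcr]
          rcases hI with hI | hI
          · have h1 : 2 * P.F * P.rho = 2 * P.F * eff + 2 * P.F := by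
              rw [← hI]; ring
            nlinarith [Nat.zero_le (2 * P.rho * run)]
          · have h1 : 2 * P.rho * P.F = 2 * P.rho * run + 2 * P.rho := by
              rw [← hI]; ring
            nlinarith [Nat.zero_le (2 * P.F * eff)]
        }
      · have hmin : min (r+1) k = min r k := by omega
        have hr1k : ¬ (r + 1 < k) := by omega
        rw [hmin, if_neg hrk, if_neg hr1k]
        split_ifs <;> nlinarith
    · rw [if_neg hI]
      simp only [potAux, ckAux_append]
      by_cases hrk : r < k
      · have hcr : cr < k := by omega
        rw [if_pos hrk, if_pos hrk, if_pos hcr]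
        nlinarith
      · rw [if_neg hrk, if_neg hrk]
        split_ifs <;> nlinarith
  · rw [if_neg hE]
    by_cases hI : run + 1 = P.F
    · rw [if_pos hI]
      simp only [potAux]
      by_cases hrk : r < k
      · have hmin : min (r+1) k = min r k + 1 := by omega
        rw [hmin, if_pos hrk]
        have h1 : 2 * P.rho * P.F = 2 * P.rho * run + 2 * P.rho := by
          rw [← hI]; ring
        split_ifs <;> nlinarith [Nat.zero_le (2 * P.F * eff)]
      · have hmin : min (r+1) k = min r k := by omega
        have hr1k : ¬ (r + 1 < k) := by omega
        rw [hmin, if_neg hrk, if_neg hr1k]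
        nlinarith
    · rw [if_neg hI]
      simp only [potAux]
      split_ifs <;> nlinarith

lemma fold_ineq (P : RankParams) (k : ℕ) (rs : List ℕ) :
    ∀ st : ℕ × ℕ × ℕ × List ℕ,
      potAux P k (List.foldl (rankStep P) st rs) + 2 * P.F * ckAux k st.2.2.2 ≤
        potAux P k st + 2 * P.rho * rs.length +
          2 * P.F * ckAux k (List.foldl (rankStep P) st rs).2.2.2 := by
  induction rs with
  | nil => intro st; simp
  | cons cr rs ih =>
      intro st
      have h1 := step_ineq P k st cr
      have h2 := ih (rankStep P st cr)
      simp only [List.foldl_cons, List.length_cons]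
      have h3 : 2 * P.rho * (rs.length + 1) = 2 * P.rho * rs.length + 2 * P.rho := by ring
      rw [h3]
      omega
/-- (With `ρ̂ = 2 f(n) + 1` and `F = 2^α · ρ̂` as in the rank definition.)
If a node `v` has rank at least `k` and at most `(k/2) · F` unmarked children, then `v` has at
least `k · ρ̂ / 2` efficiently linked unmarked children, each having rank less than `k`. -/
theorem many_efficiently_linked_children_of_small_rank
    (fv α w : ℕ) (hfv : 1 ≤ fv)
    (P : RankParams) (hP : P = ⟨2 * fv + 1, 2 ^ α * (2 * fv + 1), w⟩)
    (v : MTree) (k : ℕ)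
    (h_rank : k ≤ v.rank P)
    (h_children : 2 * v.unmarkedChildrenCount ≤ k * P.F) :
    k * P.rho ≤ 2 * ((v.effLinkedChildRanks P).filter (fun r => decide (r < k))).length := by
  obtain ⟨m, cs⟩ := v
  have hdata : MTree.rankData P (.node m cs) = rankAux P
      (((cs.filter (fun c => !c.marked)).reverse).attach.map
        (fun c => (MTree.rankData P c.1).1)) := by
    rw [MTree.rankData]
  set rs := (((cs.filter (fun c => !c.marked)).reverse).attach.map
        (fun c => (MTree.rankData P c.1).1)) with hrs
  have hlen : rs.length = (MTree.node m cs).unmarkedChildrenCount := by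
    simp [hrs, MTree.unmarkedChildrenCount, MTree.children]
  have hfold := fold_ineq P k rs (0, 0, 0, [])
  have hpot0 : potAux P k (0, 0, 0, ([] : List ℕ)) = 0 := by
    simp [potAux]
  have hck0 : ckAux k ([] : List ℕ) = 0 := by simp [ckAux]
  rw [hpot0, hck0] at hfold
  have hfin : List.foldl (rankStep P) (0, 0, 0, []) rs = MTree.rankData P (.node m cs) := by
    rw [hdata]; rfl
  rw [hfin] at hfold
  have hrank' : k ≤ (MTree.rankData P (.node m cs)).1 := h_rank
  have hminf : min (MTree.rankData P (.node m cs)).1 k = k := by omega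
  have hpotge : 2 * P.F * P.rho * k ≤ potAux P k (MTree.rankData P (.node m cs)) := by
    unfold potAux
    rw [hminf]
    omega
  set c' := ckAux k (MTree.rankData P (.node m cs)).2.2.2 with hc'
  have h1 : 2 * P.F * P.rho * k ≤ 2 * P.rho * rs.length + 2 * P.F * c' := by linarith [hpotge, hfold]
  have hgoal : k * P.rho ≤ 2 * c' := by
    rw [hlen] at h1
    have hF : 1 ≤ P.F := by
      rw [hP]
      show 1 ≤ 2 ^ α * (2 * fv + 1)
      have : 0 < 2 ^ α * (2 * fv + 1) := by positivity
      omega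
    have h2 : P.rho * (2 * (MTree.node m cs).unmarkedChildrenCount) ≤ P.rho * (k * P.F) :=
      Nat.mul_le_mul_left _ h_children
    have h3 : P.F * (k * P.rho) ≤ P.F * (2 * c') := by nlinarith
    exact Nat.le_of_mul_le_mul_left h3 (by omega)
  exact hgoal
end

section
/- Let ρ ≥ 3 be an integer and F a real number with ρ − 1 ≤ F ≤ ρ^{ρ−2} + ρ − 1. If a sequence s : ℕ → ℝ of nonnegative reals satisfies s_j ≤ ρ^j for all j ≤ ρ − 2, and s_k ≤ (ρ−1)·s_{k−1} + (F−ρ+1)·s_{k−(ρ−1)} for all k ≥ ρ − 1, then s_k ≤ ρ^k for all k ∈ ℕ. -/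
/-- Let `ρ ≥ 3` be an integer and `F` a real number with
`ρ − 1 ≤ F ≤ ρ^(ρ−2) + ρ − 1`.  If a sequence `s : ℕ → ℝ` of nonnegative reals satisfies
`s j ≤ ρ^j` for all `j ≤ ρ − 2`, and
`s k ≤ (ρ−1)·s (k−1) + (F−ρ+1)·s (k−(ρ−1))` for all `k ≥ ρ − 1`,
then `s k ≤ ρ^k` for all `k : ℕ`.  (This is the recurrence bounding the maximum size of an
unmarked heap of rank `k` in the pure-heap-model analysis.) -/
theorem pure_heap_rank_size_recurrence
    (ρ : ℕ) (hρ : 3 ≤ ρ) (F : ℝ)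
    (hF₁ : (ρ : ℝ) - 1 ≤ F) (hF₂ : F ≤ (ρ : ℝ) ^ (ρ - 2) + (ρ : ℝ) - 1)
    (s : ℕ → ℝ)
    (hs_nonneg : ∀ j, 0 ≤ s j)
    (hs_base : ∀ j ≤ ρ - 2, s j ≤ (ρ : ℝ) ^ j)
    (hs_rec : ∀ k, ρ - 1 ≤ k →
      s k ≤ ((ρ : ℝ) - 1) * s (k - 1) + (F - (ρ : ℝ) + 1) * s (k - (ρ - 1))) :
    ∀ k, s k ≤ (ρ : ℝ) ^ k := by
  intro k
  induction k using Nat.strong_induction_on with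
  | _ k ih =>
    by_cases hk : k ≤ ρ - 2
    · exact hs_base k hk
    · have hk' : ρ - 1 ≤ k := by omega
      have h1 : k - 1 < k := by omega
      have h2 : k - (ρ - 1) < k := by omega
      have e : (ρ - 2) + (k - (ρ - 1)) = k - 1 := by omega
      have e2 : k - 1 + 1 = k := by omega
      have hρr : (1 : ℝ) ≤ (ρ : ℝ) := by exact_mod_cast Nat.one_le_of_lt hρ
      have hρ0 : (0 : ℝ) ≤ (ρ : ℝ) - 1 := by linarith
      have hc0 : (0 : ℝ) ≤ F - (ρ : ℝ) + 1 := by linarith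
      have hc1 : F - (ρ : ℝ) + 1 ≤ (ρ : ℝ) ^ (ρ - 2) := by linarith
      have hb1 : s (k - 1) ≤ (ρ : ℝ) ^ (k - 1) := ih _ h1
      have hb2 : s (k - (ρ - 1)) ≤ (ρ : ℝ) ^ (k - (ρ - 1)) := ih _ h2
      have hp2 : (0 : ℝ) ≤ (ρ : ℝ) ^ (k - (ρ - 1)) := by positivity
      calc s k ≤ ((ρ : ℝ) - 1) * s (k - 1) + (F - (ρ : ℝ) + 1) * s (k - (ρ - 1)) :=
            hs_rec k hk'
        _ ≤ ((ρ : ℝ) - 1) * (ρ : ℝ) ^ (k - 1) + (ρ : ℝ) ^ (ρ - 2) * (ρ : ℝ) ^ (k - (ρ - 1)) := by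
            exact add_le_add (mul_le_mul_of_nonneg_left hb1 hρ0)
              (mul_le_mul hc1 hb2 (hs_nonneg _) (by positivity))
        _ = (ρ : ℝ) * (ρ : ℝ) ^ (k - 1) := by rw [← pow_add, e]; ring
        _ = (ρ : ℝ) ^ k := by
            rw [mul_comm]; conv_rhs => rw [← e2, pow_succ]
end
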